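/- Let Σ be an alphabet, let #, $ ∈ Σ be two distinct characters, and let T' be a string over Σ∖{#,$}. If the LZ77 parsing of T' has z' phrases, then the LZ77 parsing of the string #T'$ has at most z' + 2 phrases. -/

import Mathlib

/-- `w` occurs in `s` starting at (0-based) position `k`. -/
def occursAt {α : Type*} (w s : List α) (k : ℕ) : Prop :=
  k + w.length ≤ s.length ∧ (s.drop k).take w.length = w

/-- `w` occurs at least twice in `s`. -/
def occursTwice {α : Type*} (w s : List α) : Prop :=
  ∃ k₁ k₂ : ℕ, k₁ < k₂ ∧ occursAt w s k₁ ∧ occursAt w s k₂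

/-- `IsLZ77From T s P` holds when `P` is a valid LZ77 parsing of the suffix of `T`
starting at position `s`, relative to the whole text `T`. A triple `⟨π, λ, c⟩` encodes
the phrase `ωc` where `ω = T[s..s+λ−1]`; condition (1): `ω = T[π..π+λ−1]` when `λ > 0`
(`π = ⊥` when `λ = 0`); condition (2): `ω` is the longest string occurring at least
twice in `ω₁c₁⋯ω` (the prefix of `T` up to and including `ω`), among those that can be
followed by a trailing character of a phrase. -/
def IsLZ77From {α : Type*} (T : List α) : ℕ → List (Option ℕ × ℕ × α) → Prop
  | s, [] => s = T.length
  | s, (π, l, c) :: rest =>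
      s + l + 1 ≤ T.length ∧
      T[s + l]? = some c ∧
      (l = 0 → π = none) ∧
      (0 < l → ∃ q, π = some q ∧ q + l ≤ T.length ∧
        (T.drop q).take l = (T.drop s).take l ∧
        occursTwice ((T.drop s).take l) (T.take (s + l))) ∧
      (∀ l', l < l' → s + l' + 1 ≤ T.length →
        ¬ occursTwice ((T.drop s).take l') (T.take (s + l'))) ∧
      IsLZ77From T (s + l + 1) rest

/-- `P` is the LZ77 parsing of the text `T`. -/
def IsLZ77 {α : Type*} (T : List α) (P : List (Option ℕ × ℕ × α)) : Prop :=
  IsLZ77From T 0 P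

lemma occursAt_cons_succ {α : Type*} (a : α) (w u : List α) (k : ℕ) :
    occursAt w (a :: u) (k + 1) ↔ occursAt w u k := by
  unfold occursAt
  rw [List.drop_succ_cons, List.length_cons]
  exact ⟨fun ⟨h1, h2⟩ => ⟨by omega, h2⟩, fun ⟨h1, h2⟩ => ⟨by omega, h2⟩⟩

lemma mem_of_occursAt_cons_zero {α : Type*} {a : α} {w u : List α}
    (h : occursAt w (a :: u) 0) (hw : w ≠ []) : a ∈ w := by
  obtain ⟨h1, h2⟩ := h
  cases w with
  | nil => exact absurd rfl hw
  | cons b t =>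
    rw [List.drop_zero, List.length_cons, List.take_succ_cons] at h2
    rw [← (List.cons.injEq ..).mp h2 |>.1]
    exact List.mem_cons_self

lemma occursTwice_cons {α : Type*} (a : α) (w u : List α) (hw : w ≠ []) (ha : a ∉ w) :
    occursTwice w (a :: u) ↔ occursTwice w u := by
  constructor
  · rintro ⟨k₁, k₂, hk, h1, h2⟩
    cases k₁ with
    | zero => exact absurd (mem_of_occursAt_cons_zero h1 hw) ha
    | succ m₁ =>
      cases k₂ with
      | zero => omega
      | succ m₂ =>
        exact ⟨m₁, m₂, by omega, (occursAt_cons_succ a w u m₁).mp h1,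
          (occursAt_cons_succ a w u m₂).mp h2⟩
  · rintro ⟨k₁, k₂, hk, h1, h2⟩
    exact ⟨k₁ + 1, k₂ + 1, by omega, (occursAt_cons_succ a w u k₁).mpr h1,
      (occursAt_cons_succ a w u k₂).mpr h2⟩

lemma lz_nil_of_ge {α : Type*} {T : List α} {s : ℕ} {Q : List (Option ℕ × ℕ × α)}
    (h : IsLZ77From T s Q) (hs : T.length ≤ s) : Q = [] := by
  cases Q with
  | nil => rfl
  | cons hd rest =>
    obtain ⟨π, l, c⟩ := hd
    simp only [IsLZ77From] at h
    exact absurd h.1 (by omega)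

lemma word_eq {α : Type*} (sharp dollar : α) (T' : List α) {s l : ℕ}
    (h : s + l ≤ T'.length) :
    ((sharp :: (T' ++ [dollar])).drop (s + 1)).take l = (T'.drop s).take l := by
  rw [List.drop_succ_cons, List.drop_append_of_le_length (by omega),
    List.take_append_of_le_length (by rw [List.length_drop]; omega)]

lemma text_eq {α : Type*} (sharp dollar : α) (T' : List α) {s l : ℕ}
    (h : s + l ≤ T'.length) :
    (sharp :: (T' ++ [dollar])).take (s + 1 + l) = sharp :: T'.take (s + l) := by
  rw [show s + 1 + l = (s + l) + 1 by omega, List.take_succ_cons,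
    List.take_append_of_le_length h]

lemma key_lemma {α : Type*} (sharp dollar : α) (T' : List α) (hsharp : sharp ∉ T') :
    ∀ (P' P : List (Option ℕ × ℕ × α)) (s : ℕ),
      IsLZ77From T' s P' →
      IsLZ77From (sharp :: (T' ++ [dollar])) (s + 1) P →
      P.length ≤ P'.length + 1 := by
  have hTlen : (sharp :: (T' ++ [dollar])).length = T'.length + 2 := by simp
  intro P'
  induction P' with
  | nil =>
    intro P s hP' hP
    simp only [IsLZ77From] at hP'
    cases P with
    | nil => simp
    | cons hd tl =>
      obtain ⟨π, l, c⟩ := hd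
      simp only [IsLZ77From] at hP
      obtain ⟨h1, -, -, -, -, h6⟩ := hP
      rw [hTlen] at h1
      have hl : l = 0 := by omega
      subst hl
      have := lz_nil_of_ge h6 (by omega)
      subst this
      simp
  | cons hd tl ih =>
    intro P s hP' hP
    obtain ⟨π, l, c⟩ := hd
    simp only [IsLZ77From] at hP'
    obtain ⟨g1, g2, g3, g4, g5, g6⟩ := hP'
    cases P with
    | nil =>
      simp only [IsLZ77From] at hP
      omega
    | cons hd2 tl2 =>
      obtain ⟨π₂, l₂, c₂⟩ := hd2
      simp only [IsLZ77From] at hP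
      obtain ⟨h1, h2, h3, h4, h5, h6⟩ := hP
      rw [hTlen] at h1
      -- words of positive length m with s + m ≤ T'.length : basic facts
      have hwlen : ∀ m, s + m ≤ T'.length → ((T'.drop s).take m).length = m := by
        intro m hm
        rw [List.length_take, List.length_drop]; omega
      have hwne : ∀ m, 0 < m → s + m ≤ T'.length → (T'.drop s).take m ≠ [] := by
        intro m hm0 hm h
        have := hwlen m hm
        rw [h] at this; simp at this; omega
      have hws : ∀ m, sharp ∉ (T'.drop s).take m := fun m h =>
        hsharp (List.mem_of_mem_drop (List.mem_of_mem_take h))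
      -- Step 1 : l ≤ l₂
      have hll : l ≤ l₂ := by
        by_contra hc
        push_neg at hc
        have hl0 : 0 < l := by omega
        obtain ⟨q, _, _, _, htw⟩ := g4 hl0
        refine h5 l hc (by omega) ?_
        rw [word_eq sharp dollar T' (by omega), text_eq sharp dollar T' (by omega),
          occursTwice_cons sharp _ _ (hwne l hl0 (by omega)) (hws l)]
        exact htw
      rcases Nat.lt_or_ge l l₂ with hlt | hge
      · -- l < l₂ : forces s + l₂ = T'.length and tl2 = []
        have hsl : s + l₂ ≤ T'.length := by omega
        obtain ⟨q₂, -, -, -, htw2⟩ := h4 (by omega)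
        rw [word_eq sharp dollar T' hsl, text_eq sharp dollar T' hsl,
          occursTwice_cons sharp _ _ (hwne l₂ (by omega) hsl) (hws l₂)] at htw2
        have hend : s + l₂ = T'.length := by
          by_contra hc
          exact g5 l₂ hlt (by omega) htw2
        have := lz_nil_of_ge h6 (by omega)
        subst this
        simp
      · -- l = l₂
        have : l = l₂ := by omega
        subst this
        have := ih tl2 (s + l + 1) g6 (by
          have : s + 1 + l + 1 = s + l + 1 + 1 := by omega
          rwa [this] at h6)
        simpa using this

theorem lz77_terminators_add_two {α : Type*} (sharp dollar : α)
    (hdistinct : sharp ≠ dollar)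
    (T' : List α) (hsharp : sharp ∉ T') (hdollar : dollar ∉ T')
    (P' : List (Option ℕ × ℕ × α)) (hP' : IsLZ77 T' P')
    (P : List (Option ℕ × ℕ × α)) (hP : IsLZ77 (sharp :: (T' ++ [dollar])) P) :
    P.length ≤ P'.length + 2 := by
  unfold IsLZ77 at hP hP'
  cases P with
  | nil => simp
  | cons hd tl =>
    obtain ⟨π, l, c⟩ := hd
    simp only [IsLZ77From] at hP
    obtain ⟨h1, h2, h3, h4, h5, h6⟩ := hP
    -- the first phrase has length 0
    have hl0 : l = 0 := by
      by_contra hc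
      obtain ⟨q, _, _, _, k₁, k₂, hk, ⟨hk1, _⟩, ⟨hk2, _⟩⟩ := h4 (by omega)
      have hT : (sharp :: (T' ++ [dollar])).length = T'.length + 2 := by simp
      simp only [List.length_take, List.length_drop, List.drop_zero, hT] at hk1 hk2
      rw [hT] at h1
      omega
    subst hl0
    have : tl.length ≤ P'.length + 1 :=
      key_lemma sharp dollar T' hsharp P' tl 0 hP' (by simpa using h6)
    simpa using this
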